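/- Let 𝒳 and 𝒴 be nonempty finite sets, let P_{XY} be a joint probability mass function on 𝒳×𝒴 with X-marginal P_X(x) = ∑_y P_{XY}(x,y), and let α ∈ (1,∞). Define the α-leakage L_α(X→Y) = (α/(α−1)) · log [ (max over channels Q from 𝒴 to 𝒳 of ∑_{x,y} P_{XY}(x,y)·Q(x|y)^{(α−1)/α}) / (max over pmfs Q on 𝒳 of ∑_x P_X(x)·Q(x)^{(α−1)/α}) ]. Then L_α(X→Y) = (α/(α−1)) · log [ ∑_{y∈𝒴} (∑_{x∈𝒳} P_{XY}(x,y)^α)^{1/α} / (∑_{x∈𝒳} P_X(x)^α)^{1/α} ], i.e., the α-leakage equals the Arimoto mutual information of order α between X and Y. -/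

import Mathlib

open Real BigOperators

/-- A probability mass function on a finite set: nonnegative and sums to 1. -/
def IsPMF {X : Type} [Fintype X] (P : X → ℝ) : Prop :=
  (∀ x, 0 ≤ P x) ∧ ∑ x, P x = 1

/-- A joint probability mass function on `X × Y`. -/
def IsJointPMF {X Y : Type} [Fintype X] [Fintype Y] (P : X → Y → ℝ) : Prop :=
  (∀ x y, 0 ≤ P x y) ∧ ∑ x, ∑ y, P x y = 1

section Aux
set_option linter.unusedSectionVars false

variable {X : Type} [Fintype X] [Nonempty X]

lemma holder_bound (w : X → ℝ) (hw : ∀ x, 0 ≤ w x) {α : ℝ} (hα : 1 < α)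
    (Q : X → ℝ) (hQ : IsPMF Q) :
    ∑ x, w x * Q x ^ ((α - 1) / α) ≤ (∑ x, w x ^ α) ^ (1 / α) := by
  have hα0 : (0:ℝ) < α := lt_trans one_pos hα
  have hα1 : (0:ℝ) < α - 1 := by linarith
  have hpq : Real.HolderConjugate α (α / (α - 1)) := Real.HolderConjugate.conjExponent hα
  have h := Real.inner_le_Lp_mul_Lq_of_nonneg (s := Finset.univ) hpq
      (f := w) (g := fun x => Q x ^ ((α - 1) / α))
      (fun i _ => hw i) (fun i _ => Real.rpow_nonneg (hQ.1 i) _)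
  have hc : ((α - 1) / α) * (α / (α - 1)) = 1 := by
    field_simp
  have key : ∀ x : X, (Q x ^ ((α - 1) / α)) ^ (α / (α - 1)) = Q x := by
    intro x
    rw [← Real.rpow_mul (hQ.1 x), hc, Real.rpow_one]
  simp only [key] at h
  rw [hQ.2, Real.one_rpow, mul_one] at h
  exact h

lemma holder_attain (w : X → ℝ) (hw : ∀ x, 0 ≤ w x) {α : ℝ} (hα : 1 < α) :
    ∃ Q : X → ℝ, IsPMF Q ∧ ∑ x, w x * Q x ^ ((α - 1) / α) = (∑ x, w x ^ α) ^ (1 / α) := by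
  have hα0 : (0:ℝ) < α := lt_trans one_pos hα
  have hα1 : (0:ℝ) < α - 1 := by linarith
  set T : ℝ := ∑ x, w x ^ α with hT
  have hTnn : 0 ≤ T := Finset.sum_nonneg fun x _ => Real.rpow_nonneg (hw x) _
  rcases eq_or_lt_of_le hTnn with hT0 | hTpos
  · -- T = 0 : all w x = 0
    have hwz : ∀ x, w x = 0 := by
      intro x
      have := (Finset.sum_eq_zero_iff_of_nonneg
        (fun x _ => Real.rpow_nonneg (hw x) α)).mp hT0.symm x (Finset.mem_univ x)
      have := Real.rpow_eq_zero_iff_of_nonneg (hw x) |>.mp this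
      exact this.1
    refine ⟨fun _ => (Fintype.card X : ℝ)⁻¹, ⟨fun x => by positivity, ?_⟩, ?_⟩
    · have : (0:ℝ) < (Fintype.card X : ℝ) := by
        exact_mod_cast Fintype.card_pos
      simp [Finset.sum_const, mul_inv_cancel₀ this.ne']
    · simp [hwz, ← hT0, Real.zero_rpow (inv_ne_zero hα0.ne'), one_div]
  · -- T > 0
    refine ⟨fun x => w x ^ α / T, ⟨fun x => div_nonneg (Real.rpow_nonneg (hw x) _) hTnn, ?_⟩, ?_⟩
    · rw [← Finset.sum_div, div_self hTpos.ne']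
    · have hval : ∀ x, w x * (w x ^ α / T) ^ ((α - 1) / α)
          = w x ^ α / T ^ ((α - 1) / α) := by
        intro x
        have hmul : (w x ^ α) ^ ((α - 1) / α) = w x ^ (α - 1) := by
          rw [← Real.rpow_mul (hw x)]
          congr 1
          field_simp
        rw [Real.div_rpow (Real.rpow_nonneg (hw x) _) hTnn, hmul, ← mul_div_assoc]
        congr 1
        rcases eq_or_lt_of_le (hw x) with h0 | hpos
        · rw [← h0, Real.zero_rpow hα1.ne', Real.zero_rpow hα0.ne', mul_zero]
        · nth_rewrite 1 [← Real.rpow_one (w x)]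
          rw [← Real.rpow_add hpos]
          ring_nf
      rw [Finset.sum_congr rfl (fun x _ => hval x), ← Finset.sum_div, ← hT]
      nth_rewrite 1 [← Real.rpow_one T]
      rw [← Real.rpow_sub hTpos]
      congr 1
      field_simp
      ring

lemma holder_sSup (w : X → ℝ) (hw : ∀ x, 0 ≤ w x) {α : ℝ} (hα : 1 < α) :
    sSup {v : ℝ | ∃ Q : X → ℝ, IsPMF Q ∧ v = ∑ x, w x * Q x ^ ((α - 1) / α)}
      = (∑ x, w x ^ α) ^ (1 / α) := by
  obtain ⟨Q0, hQ0, hval⟩ := holder_attain w hw hα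
  have hne : {v : ℝ | ∃ Q : X → ℝ, IsPMF Q ∧ v = ∑ x, w x * Q x ^ ((α - 1) / α)}.Nonempty :=
    ⟨∑ x, w x * Q0 x ^ ((α - 1) / α), Q0, hQ0, rfl⟩
  apply le_antisymm
  · apply csSup_le hne
    rintro v ⟨Q, hQ, rfl⟩
    exact holder_bound w hw hα Q hQ
  · refine le_csSup ⟨(∑ x, w x ^ α) ^ (1 / α), ?_⟩ ⟨Q0, hQ0, hval.symm⟩
    rintro v ⟨Q, hQ, rfl⟩
    exact holder_bound w hw hα Q hQ

lemma channel_sSup {Y : Type} [Fintype Y] [Nonempty Y]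
    (P : X → Y → ℝ) (hP : ∀ x y, 0 ≤ P x y) {α : ℝ} (hα : 1 < α) :
    sSup {v : ℝ | ∃ Q : Y → X → ℝ, (∀ y, IsPMF (Q y)) ∧
        v = ∑ x, ∑ y, P x y * Q y x ^ ((α - 1) / α)}
      = ∑ y, (∑ x, P x y ^ α) ^ (1 / α) := by
  have hbound : ∀ Q : Y → X → ℝ, (∀ y, IsPMF (Q y)) →
      ∑ x, ∑ y, P x y * Q y x ^ ((α - 1) / α) ≤ ∑ y, (∑ x, P x y ^ α) ^ (1 / α) := by
    intro Q hQ
    rw [Finset.sum_comm]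
    exact Finset.sum_le_sum fun y _ => holder_bound (fun x => P x y) (fun x => hP x y) hα _ (hQ y)
  choose Q0 hQ0 hval using fun y => holder_attain (fun x => P x y) (fun x => hP x y) hα
  have hmem : (∑ y, (∑ x, P x y ^ α) ^ (1 / α)) ∈
      {v : ℝ | ∃ Q : Y → X → ℝ, (∀ y, IsPMF (Q y)) ∧
        v = ∑ x, ∑ y, P x y * Q y x ^ ((α - 1) / α)} := by
    exact ⟨Q0, hQ0,
      ((Finset.sum_comm ..).trans (Finset.sum_congr rfl fun y _ => hval y)).symm⟩
  apply le_antisymm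
  · apply csSup_le (Set.nonempty_of_mem hmem)
    rintro v ⟨Q, hQ, rfl⟩
    exact hbound Q hQ
  · refine le_csSup ⟨∑ y, (∑ x, P x y ^ α) ^ (1 / α), ?_⟩ hmem
    rintro v ⟨Q, hQ, rfl⟩
    exact hbound Q hQ

end Aux

/-- the α-leakage (for `1 < α < ∞`)
`L_α(X→Y) = (α/(α-1)) log [ max over channels / max over pmfs ]`
equals the Arimoto mutual information of order α. -/
theorem alpha_leakage_eq_arimoto {X Y : Type} [Fintype X] [Fintype Y]
    [Nonempty X] [Nonempty Y]
    (P : X → Y → ℝ) (hP : IsJointPMF P) (α : ℝ) (hα : 1 < α) :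
    (α / (α - 1)) * Real.log
      (sSup {v : ℝ | ∃ Q : Y → X → ℝ, (∀ y, IsPMF (Q y)) ∧
          v = ∑ x, ∑ y, P x y * Q y x ^ ((α - 1) / α)} /
       sSup {v : ℝ | ∃ Q : X → ℝ, IsPMF Q ∧
          v = ∑ x, (∑ y, P x y) * Q x ^ ((α - 1) / α)})
    = (α / (α - 1)) * Real.log
        ((∑ y, (∑ x, P x y ^ α) ^ (1 / α)) /
          (∑ x, (∑ y, P x y) ^ α) ^ (1 / α)) := by
  have h1 : sSup {v : ℝ | ∃ Q : Y → X → ℝ, (∀ y, IsPMF (Q y)) ∧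
          v = ∑ x, ∑ y, P x y * Q y x ^ ((α - 1) / α)}
      = ∑ y, (∑ x, P x y ^ α) ^ (1 / α) := channel_sSup P hP.1 hα
  have h2 : sSup {v : ℝ | ∃ Q : X → ℝ, IsPMF Q ∧
          v = ∑ x, (∑ y, P x y) * Q x ^ ((α - 1) / α)}
      = (∑ x, (∑ y, P x y) ^ α) ^ (1 / α) :=
    holder_sSup (fun x => ∑ y, P x y) (fun x => Finset.sum_nonneg fun y _ => hP.1 x y) hα
  rw [h1, h2]
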